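/- In the bowling model, a pure translation along the x-axis, represented by the Plücker vector (0,0,1,0,0,0) of the line at infinity of the yz-plane, lies in the motion space (the column span of the six joint-axis Plücker vectors); in fact it is a linear combination of the Plücker vector Y = (0,0,0,0,1,0) of the y-waist-axis and the Plücker vector of the line through the shoulder point (0,−1,1) parallel to the y-direction. -/

import Mathlib

def plucker (p q : Fin 4 → ℝ) : Fin 6 → ℝ :=
  ![p 0 * q 1 - p 1 * q 0, p 0 * q 2 - p 2 * q 0, p 0 * q 3 - p 3 * q 0,
    p 1 * q 2 - p 2 * q 1, p 1 * q 3 - p 3 * q 1, p 2 * q 3 - p 3 * q 2]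

theorem translation_along_x_possible (a b c : Fin 3 → ℝ)
    (hli : LinearIndependent ℝ (fun i : Fin 3 => ![a i, b i, c i])) :
    plucker ![0,1,0,0] ![0,0,1,0] ∈ Submodule.span ℝ
      ({![0,0,1,0,0,0], ![0,0,0,0,1,0], ![0,0,0,0,0,1],
        ![-(a 0), a 0, a 0, b 0 + c 0, b 0, c 0],
        ![-(a 1), a 1, a 1, b 1 + c 1, b 1, c 1],
        ![-(a 2), a 2, a 2, b 2 + c 2, b 2, c 2]} : Set (Fin 6 → ℝ)) ∧
    ∃ β γ : ℝ, plucker ![0,1,0,0] ![0,0,1,0] =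
      β • (![0,0,0,0,1,0] : Fin 6 → ℝ) +
      γ • plucker ![0,1,0,0] ![0,-1,1,1] := by
  have hspan : Submodule.span ℝ (Set.range fun i : Fin 3 => ![a i, b i, c i]) = ⊤ :=
    hli.span_eq_top_of_card_eq_finrank (by simp)
  have hmem : (![0,1,0] : Fin 3 → ℝ) ∈
      Submodule.span ℝ (Set.range fun i : Fin 3 => ![a i, b i, c i]) := by
    rw [hspan]; trivial
  rw [Submodule.mem_span_range_iff_exists_fun ℝ] at hmem
  obtain ⟨l, hl⟩ := hmem
  have h0 := congrFun hl 0
  have h1 := congrFun hl 1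
  have h2 := congrFun hl 2
  simp [Fin.sum_univ_three] at h0 h1 h2
  have hp1 : plucker ![0,1,0,0] ![0,0,1,0] = ![0,0,0,1,0,0] := by
    norm_num [plucker, Matrix.cons_val_two, Matrix.cons_val_three]
  have hp2 : plucker ![0,1,0,0] ![0,-1,1,1] = ![0,0,0,1,1,0] := by
    norm_num [plucker, Matrix.cons_val_two, Matrix.cons_val_three]
  rw [hp1, hp2]
  constructor
  · have e5 : ∀ (x0 x1 x2 x3 x4 x5 : ℝ), (![x0,x1,x2,x3,x4,x5] : Fin 6 → ℝ) 5 = x5 :=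
      fun _ _ _ _ _ _ => rfl
    have key : (![0,0,0,1,0,0] : Fin 6 → ℝ) =
        (-1 : ℝ) • (![0,0,0,0,1,0] : Fin 6 → ℝ) +
        (l 0 • (![-(a 0), a 0, a 0, b 0 + c 0, b 0, c 0] : Fin 6 → ℝ) +
        (l 1 • (![-(a 1), a 1, a 1, b 1 + c 1, b 1, c 1] : Fin 6 → ℝ) +
         l 2 • (![-(a 2), a 2, a 2, b 2 + c 2, b 2, c 2] : Fin 6 → ℝ))) := by
      funext i
      fin_cases i <;> simp [e5] <;> ring_nf <;> linarith
    rw [key]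
    refine Submodule.add_mem _ (Submodule.smul_mem _ _ (Submodule.subset_span (by simp)))
      (Submodule.add_mem _ (Submodule.smul_mem _ _ (Submodule.subset_span (by simp)))
      (Submodule.add_mem _ (Submodule.smul_mem _ _ (Submodule.subset_span (by simp)))
      (Submodule.smul_mem _ _ (Submodule.subset_span (by simp)))))
  · refine ⟨-1, 1, ?_⟩
    funext i
    fin_cases i <;> norm_num [show ∀ (x0 x1 x2 x3 x4 x5 : ℝ),
      (![x0,x1,x2,x3,x4,x5] : Fin 6 → ℝ) 5 = x5 from fun _ _ _ _ _ _ => rfl]
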